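/- arXiv:2409.03037 — 2 statements merged into one kernel-verified Lean document; each statement's English description precedes it below -/
import Mathlib

section
/- For every integer m ≥ 1: lim_{ρ → 0⁺} ρ^{4−m} e^{2/ρ²} ∫₀^ρ e^{−2/r²} r^{m−7} dr = 1/4. -/
open MeasureTheory Filter

private lemma expb (k : ℕ) (hk : 0 < k) {r : ℝ} (hr : 0 < r) :
    Real.exp (-2 / r ^ 2) ≤ ((k : ℝ) / 2) ^ k * r ^ (2 * k) := by
  have hk' : (0:ℝ) < k := by exact_mod_cast hk
  have hr2 : (0:ℝ) < r ^ 2 := by positivity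
  have hy : (0:ℝ) < 2 / ((k:ℝ) * r ^ 2) := by positivity
  have h1 : Real.exp (-(2 / ((k:ℝ) * r ^ 2))) ≤ (k:ℝ) * r ^ 2 / 2 := by
    rw [Real.exp_neg]
    rw [inv_le_comm₀ (Real.exp_pos _) (by positivity)]
    calc ((k:ℝ) * r ^ 2 / 2)⁻¹ = 2 / ((k:ℝ) * r ^ 2) := by field_simp
    _ ≤ 1 + 2 / ((k:ℝ) * r ^ 2) := by linarith
    _ ≤ Real.exp (2 / ((k:ℝ) * r ^ 2)) := by
          have := Real.add_one_le_exp (2 / ((k:ℝ) * r ^ 2)); linarith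
  have h2 : Real.exp (-2 / r ^ 2) = Real.exp (-(2 / ((k:ℝ) * r ^ 2))) ^ k := by
    rw [← Real.exp_nat_mul]
    field_simp
  rw [h2]
  calc Real.exp (-(2 / ((k:ℝ) * r ^ 2))) ^ k ≤ ((k:ℝ) * r ^ 2 / 2) ^ k :=
        pow_le_pow_left₀ (Real.exp_pos _).le h1 k
    _ = ((k : ℝ) / 2) ^ k * r ^ (2 * k) := by rw [pow_mul]; ring


private lemma fb (q : ℝ) (hq : -6 ≤ q) {r : ℝ} (hr : 0 < r) :
    Real.exp (-2 / r ^ 2) * r ^ q ≤ 16 * r ^ (q + 8) := by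
  have h := expb 4 (by norm_num) hr
  have h8 : (r:ℝ) ^ (2*4 : ℕ) = r ^ (8:ℝ) := by
    rw [← Real.rpow_natCast r (2*4)]; norm_num
  have hrq : (0:ℝ) < r ^ q := Real.rpow_pos_of_pos hr q
  calc Real.exp (-2 / r ^ 2) * r ^ q ≤ (((4:ℕ):ℝ)/2) ^ 4 * r ^ (2*4:ℕ) * r ^ q := by
        apply mul_le_mul_of_nonneg_right h hrq.le
    _ = 16 * (r ^ (8:ℝ) * r ^ q) := by rw [h8]; norm_num; ring
    _ = 16 * r ^ (q + 8) := by rw [← Real.rpow_add hr]; ring_nf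

private lemma fcont (q : ℝ) : ContinuousOn (fun r : ℝ => Real.exp (-2 / r ^ 2) * r ^ q) (Set.Ioi 0) := by
  apply ContinuousOn.mul
  · apply Real.continuous_exp.comp_continuousOn
    apply ContinuousOn.div continuousOn_const (by fun_prop)
    intro x hx
    have : (0:ℝ) < x := hx
    positivity
  · exact fun x hx => (Real.continuousAt_rpow_const x q (Or.inl (ne_of_gt hx))).continuousWithinAt

private lemma fint (q : ℝ) (hq : -6 ≤ q) {ρ : ℝ} (hρ : 0 < ρ) :
    IntervalIntegrable (fun r : ℝ => Real.exp (-2 / r ^ 2) * r ^ q) volume 0 ρ := by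
  rw [intervalIntegrable_iff_integrableOn_Ioc_of_le hρ.le]
  have fact : Fact (volume (Set.Ioc (0:ℝ) ρ) < ⊤) := ⟨measure_Ioc_lt_top⟩
  constructor
  · exact ((fcont q).mono Set.Ioc_subset_Ioi_self).aestronglyMeasurable measurableSet_Ioc
  · apply HasFiniteIntegral.of_bounded (C := 16 * ρ ^ (q + 8))
    filter_upwards [ae_restrict_mem measurableSet_Ioc] with r hr
    have hr0 : 0 < r := hr.1
    rw [Real.norm_eq_abs, abs_of_nonneg (by positivity)]
    refine (fb q hq hr0).trans ?_
    have : r ^ (q+8) ≤ ρ ^ (q+8) := Real.rpow_le_rpow hr0.le hr.2 (by linarith)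
    linarith

private lemma ftend (q : ℝ) (hq : -6 ≤ q) :
    Tendsto (fun r : ℝ => Real.exp (-2 / r ^ 2) * r ^ q) (nhdsWithin 0 (Set.Ioi 0)) (nhds 0) := by
  apply squeeze_zero' (g := fun r : ℝ => 16 * r ^ (q + 8))
  · filter_upwards [self_mem_nhdsWithin] with r (hr : (0:ℝ) < r)
    positivity
  · filter_upwards [self_mem_nhdsWithin] with r (hr : (0:ℝ) < r)
    exact fb q hq hr
  · have : Tendsto (fun r : ℝ => r ^ (q+8)) (nhdsWithin 0 (Set.Ioi 0)) (nhds 0) := by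
      have h0 : (0:ℝ) ^ (q+8) = 0 := Real.zero_rpow (by linarith)
      have := (Real.continuousAt_rpow_const 0 (q+8) (Or.inr (by linarith))).continuousWithinAt (s := Set.Ioi 0)
      rw [ContinuousWithinAt, h0] at this
      exact this
    have h2 := this.const_mul (16:ℝ)
    simpa using h2
private lemma keyid (m : ℕ) (hm : 1 ≤ m) {ρ : ℝ} (hρ : 0 < ρ) :
    ∫ r in (0:ℝ)..ρ, Real.exp (-2 / r ^ 2) *
        (4 * r ^ ((m : ℝ) - 7) + ((m : ℝ) - 4) * r ^ ((m : ℝ) - 5))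
      = Real.exp (-2 / ρ ^ 2) * ρ ^ ((m : ℝ) - 4) := by
  set c : ℝ := (m : ℝ) - 4 with hc
  have hm1 : (1:ℝ) ≤ (m:ℝ) := by exact_mod_cast hm
  set F : ℝ → ℝ := fun r => if r = 0 then 0 else Real.exp (-2 / r ^ 2) * r ^ c with hF
  set g : ℝ → ℝ := fun r => Real.exp (-2 / r ^ 2) *
      (4 * r ^ ((m : ℝ) - 7) + c * r ^ ((m : ℝ) - 5)) with hg
  have hint : IntervalIntegrable g volume 0 ρ := by
    have : g = fun r => 4 * (Real.exp (-2 / r ^ 2) * r ^ ((m:ℝ) - 7))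
        + c * (Real.exp (-2 / r ^ 2) * r ^ ((m:ℝ) - 5)) := by
      funext r; simp only [hg]; ring
    rw [this]
    exact ((fint _ (by linarith) hρ).const_mul 4).add ((fint _ (by linarith) hρ).const_mul c)
  have hcont : ContinuousOn F (Set.Icc 0 ρ) := by
    intro x hx
    rcases eq_or_lt_of_le hx.1 with h0 | h0
    · subst h0
      have hF0 : F 0 = 0 := by simp [hF]
      rw [ContinuousWithinAt, hF0]
      have hle : nhdsWithin (0:ℝ) (Set.Icc 0 ρ) ≤ nhdsWithin 0 (Set.Ici 0) :=
        nhdsWithin_mono _ Set.Icc_subset_Ici_self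
      apply Tendsto.mono_left ?_ hle
      have : Set.Ici (0:ℝ) = {0} ∪ Set.Ioi 0 := by
        ext y; simp [Set.mem_Ici, Set.mem_Ioi, le_iff_lt_or_eq]
      rw [this, nhdsWithin_union]
      apply Tendsto.sup
      · rw [nhdsWithin_singleton]
        have := tendsto_pure_nhds F 0
        rwa [hF0] at this
      · apply Tendsto.congr' ?_ (ftend c (by linarith))
        filter_upwards [self_mem_nhdsWithin] with y (hy : (0:ℝ) < y)
        simp [hF, hy.ne']
    · have hev : (fun r : ℝ => Real.exp (-2 / r ^ 2) * r ^ c) =ᶠ[nhds x] F := by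
        filter_upwards [eventually_ne_nhds h0.ne'] with y hy
        simp [hF, hy]
      exact (((fcont c).continuousAt (Ioi_mem_nhds h0)).congr hev).continuousWithinAt
  have hderiv : ∀ x ∈ Set.Ioo 0 ρ, HasDerivWithinAt F (g x) (Set.Ioi x) x := by
    intro x hx
    have hx0 : 0 < x := hx.1
    have h1 : HasDerivAt (fun r : ℝ => -2 / r ^ 2) (4 / x ^ 3) x := by
      have h0 := ((hasDerivAt_pow 2 x).inv (by positivity : x ^ 2 ≠ 0)).const_mul (-2 : ℝ)
      have heq : (fun r : ℝ => -2 * (r ^ 2)⁻¹) = fun r : ℝ => -2 / r ^ 2 := by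
        funext r; ring
      change HasDerivAt (fun r : ℝ => -2 * (r ^ 2)⁻¹) _ x at h0; rw [heq] at h0
      convert h0 using 1
      field_simp
      ring
    have h2 := h1.exp
    have h3 : HasDerivAt (fun r : ℝ => r ^ c) (c * x ^ (c - 1)) x :=
      Real.hasDerivAt_rpow_const (Or.inl hx0.ne')
    have h4 := h2.mul h3
    have heq : Real.exp (-2 / x ^ 2) * (4 / x ^ 3) * x ^ c
        + Real.exp (-2 / x ^ 2) * (c * x ^ (c - 1)) = g x := by
      have e1 : x ^ c / x ^ (3:ℕ) = x ^ ((m:ℝ) - 7) := by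
        rw [← Real.rpow_natCast x 3, ← Real.rpow_sub hx0]
        norm_num [hc]
        ring_nf
      have e2 : x ^ (c - 1) = x ^ ((m:ℝ) - 5) := by
        congr 1
        rw [hc]; ring
      simp only [hg]
      rw [e2, ← e1]
      field_simp
    rw [← heq]
    apply HasDerivAt.hasDerivWithinAt
    apply h4.congr_of_eventuallyEq
    filter_upwards [eventually_ne_nhds hx0.ne'] with y hy
    simp [hF, hy]
  have := intervalIntegral.integral_eq_sub_of_hasDeriv_right_of_le hρ.le hcont hderiv hint
  rw [this]
  simp [hF, hρ.ne']
set_option maxHeartbeats 1000000 in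
/-- For every integer `m ≥ 1`,
`lim_{ρ→0⁺} ρ^{4−m} e^{2/ρ²} ∫₀^ρ e^{−2/r²} r^{m−7} dr = 1/4`. -/
theorem stmt_10 (m : ℕ) (hm : 1 ≤ m) :
    Tendsto
      (fun ρ : ℝ => ρ ^ ((4 : ℝ) - m) * Real.exp (2 / ρ ^ 2) *
        ∫ r in (0 : ℝ)..ρ, Real.exp (-2 / r ^ 2) * r ^ ((m : ℝ) - 7))
      (nhdsWithin 0 (Set.Ioi 0)) (nhds (1 / 4)) := by
  have hm1 : (1:ℝ) ≤ (m:ℝ) := by exact_mod_cast hm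
  set c : ℝ := (m : ℝ) - 4 with hc
  set T : ℝ → ℝ := fun ρ => ρ ^ ((4 : ℝ) - m) * Real.exp (2 / ρ ^ 2) *
        ∫ r in (0 : ℝ)..ρ, Real.exp (-2 / r ^ 2) * r ^ ((m : ℝ) - 7) with hT
  clear_value c T
  have key : Tendsto (fun ρ => T ρ - 1/4) (nhdsWithin 0 (Set.Ioi 0)) (nhds 0) := by
    apply squeeze_zero_norm' (a := fun ρ : ℝ => |c| / 12 * ρ ^ 2)
    · -- eventual bound
      set δ : ℝ := min 1 (1 / (|c| + 1)) with hδ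
      clear_value δ
      have hδ0 : 0 < δ := by
        rw [hδ]
        apply lt_min one_pos
        positivity
      have hmem : Set.Ioo (0:ℝ) δ ∈ nhdsWithin (0:ℝ) (Set.Ioi 0) := by
        exact Ioo_mem_nhdsGT_of_mem ⟨le_refl 0, hδ0⟩
      filter_upwards [hmem] with ρ hρ
      obtain ⟨hρ0, hρδ⟩ := hρ
      rw [hδ] at hρδ
      have hρ2 : |c| * ρ ^ 2 ≤ 1 := by
        have h1 : ρ ≤ 1 := le_of_lt (lt_of_lt_of_le hρδ (min_le_left _ _))
        have h2 : ρ ≤ 1 / (|c| + 1) := le_of_lt (lt_of_lt_of_le hρδ (min_le_right _ _))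
        have h3 : ρ ^ 2 ≤ ρ := by nlinarith
        have h4 : ρ * (|c| + 1) ≤ 1 := by
          rw [div_eq_mul_inv, one_mul] at h2
          calc ρ * (|c| + 1) ≤ (|c| + 1)⁻¹ * (|c| + 1) := by
                apply mul_le_mul_of_nonneg_right h2 (by positivity)
          _ = 1 := by field_simp
        nlinarith [abs_nonneg c]
      set I : ℝ := ∫ r in (0 : ℝ)..ρ, Real.exp (-2 / r ^ 2) * r ^ ((m : ℝ) - 7) with hI
      set J : ℝ := ∫ r in (0 : ℝ)..ρ, Real.exp (-2 / r ^ 2) * r ^ ((m : ℝ) - 5) with hJ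
      set K : ℝ := ρ ^ ((4 : ℝ) - m) * Real.exp (2 / ρ ^ 2) with hK
      clear_value I J K
      have hK0 : 0 < K := by
        rw [hK]
        apply mul_pos (Real.rpow_pos_of_pos hρ0 _) (Real.exp_pos _)
      have hI0 : 0 ≤ I := by
        rw [hI]
        apply intervalIntegral.integral_nonneg hρ0.le
        intro u hu
        exact mul_nonneg (Real.exp_pos _).le (Real.rpow_nonneg hu.1 _)
      have hJ0 : 0 ≤ J := by
        rw [hJ]
        apply intervalIntegral.integral_nonneg hρ0.le
        intro u hu
        exact mul_nonneg (Real.exp_pos _).le (Real.rpow_nonneg hu.1 _)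
      have hintI := fint ((m:ℝ) - 7) (by linarith) hρ0
      have hintJ := fint ((m:ℝ) - 5) (by linarith) hρ0
      have hJI : J ≤ ρ ^ 2 * I := by
        have hint2 : IntervalIntegrable (fun r : ℝ => ρ ^ 2 * (Real.exp (-2 / r ^ 2) * r ^ ((m:ℝ) - 7))) volume 0 ρ := hintI.const_mul _
        have hmono := intervalIntegral.integral_mono_ae_restrict (μ := volume)
          (a := (0:ℝ)) (b := ρ) hρ0.le hintJ hint2 ?_
        · rw [intervalIntegral.integral_const_mul] at hmono
          rw [hI, hJ]
          exact hmono
        · have hne : ∀ᵐ r : ℝ ∂(volume.restrict (Set.Icc 0 ρ)), r ≠ 0 := by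
            apply ae_restrict_of_ae
            rw [ae_iff]
            simp only [not_ne_iff, Set.setOf_eq_eq_singleton]
            exact measure_singleton 0
          filter_upwards [hne, ae_restrict_mem measurableSet_Icc] with r hr0 hr
          have hrpos : 0 < r := lt_of_le_of_ne hr.1 (Ne.symm hr0)
          have e5 : r ^ ((m:ℝ) - 5) = r ^ ((m:ℝ) - 7) * r ^ 2 := by
            rw [← Real.rpow_natCast r 2, ← Real.rpow_add hrpos]
            congr 1
            ring
          rw [e5]
          have : (0:ℝ) ≤ Real.exp (-2 / r ^ 2) * r ^ ((m:ℝ) - 7) := by positivity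
          have h2 : r ^ 2 ≤ ρ ^ 2 := by nlinarith [hr.2]
          nlinarith
      have hkey : 4 * I + c * J = Real.exp (-2 / ρ ^ 2) * ρ ^ c := by
        rw [hc, ← keyid m hm hρ0]
        have : (fun r : ℝ => Real.exp (-2 / r ^ 2) *
            (4 * r ^ ((m : ℝ) - 7) + ((m : ℝ) - 4) * r ^ ((m : ℝ) - 5)))
            = fun r : ℝ => 4 * (Real.exp (-2 / r ^ 2) * r ^ ((m:ℝ) - 7))
              + ((m:ℝ) - 4) * (Real.exp (-2 / r ^ 2) * r ^ ((m:ℝ) - 5)) := by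
          funext r; ring
        rw [this, intervalIntegral.integral_add (hintI.const_mul 4) (hintJ.const_mul _),
          intervalIntegral.integral_const_mul, intervalIntegral.integral_const_mul, hI, hJ]
      have hKE : K * (Real.exp (-2 / ρ ^ 2) * ρ ^ c) = 1 := by
        rw [hK]
        have e1 : Real.exp (2 / ρ ^ 2) * Real.exp (-2 / ρ ^ 2) = 1 := by
          rw [← Real.exp_add]
          ring_nf
          exact Real.exp_zero
        have e2 : ρ ^ ((4:ℝ) - m) * ρ ^ c = 1 := by
          rw [← Real.rpow_add hρ0, hc]
          norm_num
        calc ρ ^ ((4:ℝ) - m) * Real.exp (2 / ρ ^ 2) * (Real.exp (-2 / ρ ^ 2) * ρ ^ c)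
            = (ρ ^ ((4:ℝ) - m) * ρ ^ c) * (Real.exp (2 / ρ ^ 2) * Real.exp (-2 / ρ ^ 2)) := by ring
        _ = 1 := by rw [e1, e2, mul_one]
      have hTKI : T ρ = K * I := by rw [hT, hK, hI]
      have harith : ∀ t u : ℝ, 4 * t + c * u = 1 → 0 ≤ u → u ≤ ρ ^ 2 * t → 0 ≤ t →
          |t - 1/4| ≤ |c| / 12 * ρ ^ 2 := by
        intro t u h1 h2 h3 h4
        have hcabs1 : c ≤ |c| := le_abs_self c
        have hcabs2 : -|c| ≤ c := neg_abs_le c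
        have p1 : -|c| * u ≤ c * u := mul_le_mul_of_nonneg_right hcabs2 h2
        have p2 : c * u ≤ |c| * u := mul_le_mul_of_nonneg_right hcabs1 h2
        have p3 : |c| * u ≤ |c| * (ρ ^ 2 * t) := mul_le_mul_of_nonneg_left h3 (abs_nonneg c)
        have p4 : |c| * (ρ ^ 2 * t) ≤ t := by
          calc |c| * (ρ ^ 2 * t) = (|c| * ρ ^ 2) * t := by ring
          _ ≤ 1 * t := mul_le_mul_of_nonneg_right hρ2 h4
          _ = t := one_mul t
        have hTle : t ≤ 1/3 := by linarith
        have p5 : |c| * (ρ ^ 2 * t) ≤ |c| * (ρ ^ 2 * (1/3)) := by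
          apply mul_le_mul_of_nonneg_left ?_ (abs_nonneg c)
          apply mul_le_mul_of_nonneg_left hTle (sq_nonneg ρ)
        rw [abs_le]
        constructor <;> nlinarith [abs_nonneg c, sq_nonneg ρ]
      have hmain : 4 * (K * I) + c * (K * J) = 1 := by
        calc 4 * (K * I) + c * (K * J) = K * (4 * I + c * J) := by ring
        _ = K * (Real.exp (-2 / ρ ^ 2) * ρ ^ c) := by rw [hkey]
        _ = 1 := hKE
      have hUT : K * J ≤ ρ ^ 2 * (K * I) := by
        calc K * J ≤ K * (ρ ^ 2 * I) := mul_le_mul_of_nonneg_left hJI hK0.le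
        _ = ρ ^ 2 * (K * I) := by ring
      rw [hTKI, Real.norm_eq_abs]
      exact harith (K * I) (K * J) hmain (mul_nonneg hK0.le hJ0) hUT (mul_nonneg hK0.le hI0)
    · have : Tendsto (fun ρ : ℝ => |c| / 12 * ρ ^ 2) (nhds 0) (nhds (|c| / 12 * 0 ^ 2)) := by
        apply Tendsto.const_mul
        exact (continuous_pow 2).tendsto 0
      simp only [ne_eq, OfNat.ofNat_ne_zero, not_false_eq_true, zero_pow, mul_zero] at this
      exact this.mono_left nhdsWithin_le_nhds
  have hfin := key.add (tendsto_const_nhds (x := (1/4 : ℝ)))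
  rw [zero_add] at hfin
  exact hfin.congr fun ρ => by ring
end

section
/- Let m ≥ 1 and define D(ρ) := ρ^{2−m} ∫₀^ρ ( 4 e^{−2/r²} r^{−6} / √(1 + 4 e^{−2/r²} r^{−6}) ) r^{m−1} dr and H(ρ) := e^{−2/ρ²} / √(1 + 4 e^{−2/ρ²} ρ^{−6}) for ρ ∈ (0,1]. Then H(ρ) > 0 for all ρ > 0 and D(ρ)/H(ρ) → +∞ as ρ → 0⁺. (These are, up to a common factor σ_{m−1}, the intrinsic Dirichlet energy and the intrinsic L² height of the graph of f(x) = e^{−1/|x|²} over the plane ℝ^m × {0}; hence the intrinsic planar frequency of this semicalibrated graph blows up at the origin.) -/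
open MeasureTheory Filter

private lemma aux_exp_quart (x : ℝ) (hx : 0 ≤ x) : x ^ 4 / 256 ≤ Real.exp x := by
  have h : x / 4 + 1 ≤ Real.exp (x / 4) := Real.add_one_le_exp _
  have h2 : Real.exp x = (Real.exp (x / 4)) ^ 4 := by
    rw [← Real.exp_nat_mul]; congr 1; push_cast; ring
  rw [h2]
  calc x ^ 4 / 256 = (x / 4) ^ 4 := by ring
    _ ≤ (x / 4 + 1) ^ 4 := by
        apply pow_le_pow_left₀ (by positivity); linarith
    _ ≤ (Real.exp (x / 4)) ^ 4 := by
        apply pow_le_pow_left₀ (by positivity); linarith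

private lemma aux_exp_le (r : ℝ) (hr : 0 < r) : Real.exp (-2 / r ^ 2) ≤ 16 * r ^ 8 := by
  have h := aux_exp_quart (2 / r ^ 2) (by positivity)
  have hkey : (1 : ℝ) / (16 * r ^ 8) = (2 / r ^ 2) ^ 4 / 256 := by
    field_simp; ring
  have hE : 1 / (16 * r ^ 8) ≤ Real.exp (2 / r ^ 2) := by rw [hkey]; exact h
  have h3 : Real.exp (-2 / r ^ 2) = (Real.exp (2 / r ^ 2))⁻¹ := by
    rw [← Real.exp_neg]; ring_nf
  rw [h3]
  have hp : (0 : ℝ) < 1 / (16 * r ^ 8) := by positivity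
  calc (Real.exp (2 / r ^ 2))⁻¹ ≤ (1 / (16 * r ^ 8))⁻¹ := by
        exact inv_anti₀ hp hE
    _ = 16 * r ^ 8 := by rw [one_div, inv_inv]

/-- the integrand, in `ℕ`-power form -/
noncomputable def auxG (k : ℕ) (r : ℝ) : ℝ :=
  4 * Real.exp (-2 / r ^ 2) * (r ^ 6)⁻¹ /
    Real.sqrt (1 + 4 * Real.exp (-2 / r ^ 2) * (r ^ 6)⁻¹) * r ^ k

private lemma auxG_nonneg (k : ℕ) (r : ℝ) (hr : 0 ≤ r) : 0 ≤ auxG k r := by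
  unfold auxG
  exact mul_nonneg (div_nonneg (by positivity) (Real.sqrt_nonneg _)) (pow_nonneg hr k)

private lemma auxG_meas (k : ℕ) : Measurable (auxG k) := by
  unfold auxG
  have h1 : Measurable (fun r : ℝ => Real.exp (-2 / r ^ 2)) :=
    Real.measurable_exp.comp (measurable_const.div (measurable_id.pow_const 2))
  have h2 : Measurable (fun r : ℝ => (r ^ 6)⁻¹) := (measurable_id.pow_const 6).inv
  exact ((((measurable_const.mul h1).mul h2).div
    (Real.continuous_sqrt.measurable.comp
      (measurable_const.add ((measurable_const.mul h1).mul h2)))).mul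
    ((measurable_id.pow_const k)))

private lemma auxG_le (k : ℕ) (r : ℝ) (hr : 0 < r) (hr1 : r ≤ 1) :
    auxG k r ≤ 64 * r ^ 2 := by
  unfold auxG
  have hnum : (0:ℝ) ≤ 4 * Real.exp (-2 / r ^ 2) * (r ^ 6)⁻¹ := by positivity
  have hs : (1:ℝ) ≤ Real.sqrt (1 + 4 * Real.exp (-2 / r ^ 2) * (r ^ 6)⁻¹) :=
    Real.one_le_sqrt.2 (by linarith)
  have h1 : 4 * Real.exp (-2 / r ^ 2) * (r ^ 6)⁻¹ /
      Real.sqrt (1 + 4 * Real.exp (-2 / r ^ 2) * (r ^ 6)⁻¹) ≤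
      4 * Real.exp (-2 / r ^ 2) * (r ^ 6)⁻¹ := div_le_self hnum hs
  have h2 : 4 * Real.exp (-2 / r ^ 2) * (r ^ 6)⁻¹ ≤ 64 * r ^ 2 := by
    have := aux_exp_le r hr
    have hr6 : (0:ℝ) < r ^ 6 := by positivity
    rw [show (64:ℝ) * r ^ 2 = 4 * (16 * r ^ 8) * (r ^ 6)⁻¹ by field_simp; ring]
    gcongr
  have h3 : r ^ k ≤ 1 := pow_le_one₀ hr.le hr1
  calc 4 * Real.exp (-2 / r ^ 2) * (r ^ 6)⁻¹ /
      Real.sqrt (1 + 4 * Real.exp (-2 / r ^ 2) * (r ^ 6)⁻¹) * r ^ k ≤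
      (64 * r ^ 2) * 1 := by
        exact mul_le_mul (le_trans h1 h2) h3 (pow_nonneg hr.le k) (by positivity)
    _ = 64 * r ^ 2 := by ring

private lemma auxG_intble (k : ℕ) (ρ : ℝ) (h0 : 0 < ρ) (h1 : ρ ≤ 1) :
    IntervalIntegrable (auxG k) volume 0 ρ := by
  rw [intervalIntegrable_iff]
  apply Measure.integrableOn_of_bounded (M := 64)
  · rw [Set.uIoc_of_le h0.le]
    exact (measure_Ioc_lt_top).ne
  · exact (auxG_meas k).aestronglyMeasurable
  · rw [ae_restrict_iff' measurableSet_uIoc]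
    refine ae_of_all _ fun r hr => ?_
    rw [Set.uIoc_of_le h0.le] at hr
    have hrpos : 0 < r := hr.1
    have hr1 : r ≤ 1 := le_trans hr.2 h1
    rw [Real.norm_eq_abs, abs_of_nonneg (auxG_nonneg k r hrpos.le)]
    calc auxG k r ≤ 64 * r ^ 2 := auxG_le k r hrpos hr1
      _ ≤ 64 * 1 := by nlinarith
      _ = 64 := by norm_num

/-- Key quantitative lower bound. -/
private lemma aux_key (k : ℕ) (ρ : ℝ) (h0 : 0 < ρ) (h1 : ρ ≤ 1 / 32) :
    ((2:ℝ) ^ k)⁻¹ / ρ ≤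
      (ρ ^ ((2:ℝ) - ((k+1 : ℕ) : ℝ)) * ∫ r in (0:ℝ)..ρ, auxG k r) /
        (Real.exp (-2 / ρ ^ 2) /
          Real.sqrt (1 + 4 * Real.exp (-2 / ρ ^ 2) * (ρ ^ 6)⁻¹)) := by
  have hρ1 : ρ ≤ 1 := by linarith
  set A : ℝ := ρ - ρ ^ 4 with hA
  have hA2 : ρ / 2 ≤ A := by
    have h3 := pow_le_pow_left₀ h0.le h1 3
    nlinarith [h3, mul_le_mul_of_nonneg_left h3 h0.le, h0]
  have hA0 : 0 < A := lt_of_lt_of_le (by linarith) hA2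
  have hAρ : A ≤ ρ := by nlinarith [pow_pos h0 4]
  set e₁ : ℝ := Real.exp (-2 / A ^ 2) with he₁
  set e₂ : ℝ := Real.exp (-2 / ρ ^ 2) with he₂
  set L : ℝ := 2 * e₁ * (ρ ^ 6)⁻¹ * (ρ / 2) ^ k with hL
  -- the pointwise lower bound on [A, ρ]
  have hGL : ∀ r ∈ Set.Icc A ρ, L ≤ auxG k r := by
    intro r hr
    have hrpos : 0 < r := lt_of_lt_of_le hA0 hr.1
    have hnum : (0:ℝ) ≤ 4 * Real.exp (-2 / r ^ 2) * (r ^ 6)⁻¹ := by positivity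
    -- the sqrt is at most 2
    have hnum_small : 4 * Real.exp (-2 / r ^ 2) * (r ^ 6)⁻¹ ≤ 1 := by
      have h64 : 4 * Real.exp (-2 / r ^ 2) * (r ^ 6)⁻¹ ≤ 64 * r ^ 2 := by
        have := aux_exp_le r hrpos
        have hr6 : (0:ℝ) < r ^ 6 := by positivity
        rw [show (64:ℝ) * r ^ 2 = 4 * (16 * r ^ 8) * (r ^ 6)⁻¹ by field_simp; ring]
        gcongr
      have hrle : r ≤ 1/32 := le_trans hr.2 h1
      nlinarith [hrpos]
    have hsqrt_le : Real.sqrt (1 + 4 * Real.exp (-2 / r ^ 2) * (r ^ 6)⁻¹) ≤ 2 := by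
      calc Real.sqrt (1 + 4 * Real.exp (-2 / r ^ 2) * (r ^ 6)⁻¹) ≤ Real.sqrt 4 := by
            apply Real.sqrt_le_sqrt; linarith
        _ = 2 := by
            rw [show (4:ℝ) = 2 ^ 2 by norm_num, Real.sqrt_sq (by norm_num : (0:ℝ) ≤ 2)]
    have hsqrt_pos : 0 < Real.sqrt (1 + 4 * Real.exp (-2 / r ^ 2) * (r ^ 6)⁻¹) :=
      Real.sqrt_pos.2 (by positivity)
    -- exp monotonicity
    have hexp_mono : e₁ ≤ Real.exp (-2 / r ^ 2) := by
      apply Real.exp_le_exp.2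
      have hA2r : A ^ 2 ≤ r ^ 2 := by nlinarith [hr.1, hA0]
      have : 2 / r ^ 2 ≤ 2 / A ^ 2 := by
        apply div_le_div_of_nonneg_left (by norm_num) (by positivity) hA2r
      rw [neg_div, neg_div]; linarith
    have hinv : (ρ ^ 6)⁻¹ ≤ (r ^ 6)⁻¹ := by
      apply inv_anti₀ (by positivity)
      exact pow_le_pow_left₀ hrpos.le hr.2 6
    have hpowk : (ρ / 2) ^ k ≤ r ^ k :=
      pow_le_pow_left₀ (by positivity) (le_trans hA2 hr.1) k
    have step1 : L ≤ (4 * Real.exp (-2 / r ^ 2) * (r ^ 6)⁻¹ / 2) * r ^ k := by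
      have e1 : 2 * e₁ * (ρ ^ 6)⁻¹ ≤ 2 * Real.exp (-2 / r ^ 2) * (r ^ 6)⁻¹ := by
        have := Real.exp_pos (-2 / A ^ 2)
        apply mul_le_mul (by gcongr) hinv (by positivity) (by positivity)
      calc L ≤ (2 * Real.exp (-2 / r ^ 2) * (r ^ 6)⁻¹) * (ρ / 2) ^ k := by
            apply mul_le_mul_of_nonneg_right e1 (by positivity)
        _ ≤ (2 * Real.exp (-2 / r ^ 2) * (r ^ 6)⁻¹) * r ^ k := by
            apply mul_le_mul_of_nonneg_left hpowk (by positivity)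
        _ = (4 * Real.exp (-2 / r ^ 2) * (r ^ 6)⁻¹ / 2) * r ^ k := by ring
    have step2 : 4 * Real.exp (-2 / r ^ 2) * (r ^ 6)⁻¹ / 2 ≤
        4 * Real.exp (-2 / r ^ 2) * (r ^ 6)⁻¹ /
          Real.sqrt (1 + 4 * Real.exp (-2 / r ^ 2) * (r ^ 6)⁻¹) := by
      apply div_le_div_of_nonneg_left hnum hsqrt_pos hsqrt_le
    calc L ≤ (4 * Real.exp (-2 / r ^ 2) * (r ^ 6)⁻¹ / 2) * r ^ k := step1
      _ ≤ auxG k r := by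
          unfold auxG
          exact mul_le_mul_of_nonneg_right step2 (pow_nonneg hrpos.le k)
  -- integral lower bound
  have hInt : IntervalIntegrable (auxG k) volume 0 ρ := auxG_intble k ρ h0 hρ1
  have hsub1 : Set.uIcc (0:ℝ) A ⊆ Set.uIcc (0:ℝ) ρ :=
    Set.uIcc_subset_uIcc (Set.left_mem_uIcc) (by
      rw [Set.uIcc_of_le h0.le]; exact ⟨hA0.le, hAρ⟩)
  have hsub2 : Set.uIcc A ρ ⊆ Set.uIcc (0:ℝ) ρ :=
    Set.uIcc_subset_uIcc (by rw [Set.uIcc_of_le h0.le]; exact ⟨hA0.le, hAρ⟩)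
      (Set.right_mem_uIcc)
  have hsplit : (∫ r in (0:ℝ)..A, auxG k r) + ∫ r in A..ρ, auxG k r
      = ∫ r in (0:ℝ)..ρ, auxG k r :=
    intervalIntegral.integral_add_adjacent_intervals (hInt.mono_set hsub1)
      (hInt.mono_set hsub2)
  have hnn : 0 ≤ ∫ r in (0:ℝ)..A, auxG k r :=
    intervalIntegral.integral_nonneg hA0.le fun u hu => auxG_nonneg k u hu.1
  have hI2 : (ρ - A) * L ≤ ∫ r in A..ρ, auxG k r := by
    calc (ρ - A) * L = ∫ _ in A..ρ, L := by
          rw [intervalIntegral.integral_const, smul_eq_mul]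
      _ ≤ ∫ r in A..ρ, auxG k r :=
          intervalIntegral.integral_mono_on hAρ intervalIntegrable_const
            (hInt.mono_set hsub2) hGL
  have hIlow : (ρ - A) * L ≤ ∫ r in (0:ℝ)..ρ, auxG k r := by
    rw [← hsplit]; linarith
  -- the exponential comparison
  have hexp2 : 2 / A ^ 2 - 2 / ρ ^ 2 ≤ 1 / 2 := by
    have hA2sq : ρ ^ 2 / 4 ≤ A ^ 2 := by nlinarith [hA2, h0]
    rw [div_sub_div _ _ (by positivity : (A:ℝ) ^ 2 ≠ 0) (by positivity : (ρ:ℝ) ^ 2 ≠ 0),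
      div_le_iff₀ (by positivity)]
    nlinarith [hA2sq, pow_pos h0 4, pow_pos h0 2]
  have h5 : e₂ / 2 ≤ e₁ := by
    have hh : Real.exp (-2 / ρ ^ 2 - 1 / 2) ≤ e₁ := by
      apply Real.exp_le_exp.2
      rw [neg_div, neg_div] at *
      linarith
    have h6 : e₂ * (1 / 2) ≤ e₂ * Real.exp (-(1 / 2)) := by
      have := Real.add_one_le_exp (-(1/2) : ℝ)
      have := Real.exp_pos (-2 / ρ ^ 2)
      apply mul_le_mul_of_nonneg_left (by linarith) (by positivity)
    calc e₂ / 2 = e₂ * (1 / 2) := by ring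
      _ ≤ e₂ * Real.exp (-(1/2)) := h6
      _ = Real.exp (-2 / ρ ^ 2 - 1 / 2) := by rw [he₂, ← Real.exp_add]; ring_nf
      _ ≤ e₁ := hh
  -- bound H from above, D from below, combine
  have he₂pos : 0 < e₂ := Real.exp_pos _
  have hsqrtρ : (1:ℝ) ≤ Real.sqrt (1 + 4 * e₂ * (ρ ^ 6)⁻¹) :=
    Real.one_le_sqrt.2 (by
      have : (0:ℝ) ≤ 4 * e₂ * (ρ ^ 6)⁻¹ := by positivity
      linarith)
  have hHle : e₂ / Real.sqrt (1 + 4 * e₂ * (ρ ^ 6)⁻¹) ≤ e₂ := div_le_self he₂pos.le hsqrtρ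
  have hHpos : 0 < e₂ / Real.sqrt (1 + 4 * e₂ * (ρ ^ 6)⁻¹) := by
    have : 0 < Real.sqrt (1 + 4 * e₂ * (ρ ^ 6)⁻¹) := Real.sqrt_pos.2 (by positivity)
    positivity
  have hrpow : (0:ℝ) ≤ ρ ^ ((2:ℝ) - ((k+1 : ℕ) : ℝ)) := Real.rpow_nonneg h0.le _
  have hDnn : 0 ≤ ρ ^ ((2:ℝ) - ((k+1 : ℕ) : ℝ)) * ∫ r in (0:ℝ)..ρ, auxG k r := by
    apply mul_nonneg hrpow
    exact intervalIntegral.integral_nonneg h0.le fun u hu => auxG_nonneg k u hu.1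
  have hDlow : ρ ^ ((2:ℝ) - ((k+1 : ℕ) : ℝ)) * ((ρ - A) * L) ≤
      ρ ^ ((2:ℝ) - ((k+1 : ℕ) : ℝ)) * ∫ r in (0:ℝ)..ρ, auxG k r :=
    mul_le_mul_of_nonneg_left hIlow hrpow
  have hdivdiv : ρ ^ ((2:ℝ) - ((k+1 : ℕ) : ℝ)) * ((ρ - A) * L) / e₂ ≤
      (ρ ^ ((2:ℝ) - ((k+1 : ℕ) : ℝ)) * ∫ r in (0:ℝ)..ρ, auxG k r) /
        (e₂ / Real.sqrt (1 + 4 * e₂ * (ρ ^ 6)⁻¹)) :=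
    div_le_div₀ hDnn (le_trans hDlow (le_refl _)) hHpos hHle
  refine le_trans ?_ hdivdiv
  -- the remaining purely algebraic estimate
  have hpow2 : ρ ^ ((2:ℝ) - ((k+1 : ℕ) : ℝ)) = ρ ^ 2 / ρ ^ (k+1) := by
    rw [Real.rpow_sub h0, show ((2:ℝ)) = ((2:ℕ):ℝ) by norm_num, Real.rpow_natCast,
      Real.rpow_natCast]
  have hρA : ρ - A = ρ ^ 4 := by rw [hA]; ring
  rw [hpow2, hρA, hL]
  have hρne : ρ ≠ 0 := ne_of_gt h0
  have h2k : ((2:ℝ) ^ k) ≠ 0 := by positivity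
  have hRHS : ρ ^ 2 / ρ ^ (k+1) * (ρ ^ 4 * (2 * e₁ * (ρ ^ 6)⁻¹ * (ρ / 2) ^ k)) / e₂
      = 2 * e₁ / (2 ^ k * ρ * e₂) := by
    field_simp
    rw [mul_assoc _ ((ρ / 2) ^ k), ← mul_pow, div_mul_cancel₀ _ (two_ne_zero)]; ring
  rw [hRHS, div_le_div_iff₀ (by positivity) (by positivity)]
  have : ρ * e₂ ≤ ρ * (2 * e₁) := mul_le_mul_of_nonneg_left (by linarith) h0.le
  calc ((2:ℝ) ^ k)⁻¹ * (2 ^ k * ρ * e₂) = ρ * e₂ := by field_simp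
    _ ≤ ρ * (2 * e₁) := this
    _ = 2 * e₁ * ρ := by ring

/-- With `D(ρ) = ρ^{2−m} ∫₀^ρ (4e^{−2/r²}r^{−6}/√(1+4e^{−2/r²}r^{−6})) r^{m−1} dr`
(the intrinsic Dirichlet energy) and `H(ρ) = e^{−2/ρ²}/√(1+4e^{−2/ρ²}ρ^{−6})`
(the intrinsic `L²` height) of the graph of `f(x) = e^{−1/|x|²}`, one has `H(ρ) > 0`
for all `ρ > 0` and the planar frequency `D(ρ)/H(ρ)` blows up as `ρ → 0⁺`. -/
theorem stmt_11 (m : ℕ) (hm : 1 ≤ m) (D H : ℝ → ℝ)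
    (hD : ∀ ρ : ℝ, D ρ = ρ ^ ((2 : ℝ) - m) *
      ∫ r in (0 : ℝ)..ρ,
        (4 * Real.exp (-2 / r ^ 2) * r ^ ((-6 : ℝ)) /
          Real.sqrt (1 + 4 * Real.exp (-2 / r ^ 2) * r ^ ((-6 : ℝ)))) * r ^ ((m : ℝ) - 1))
    (hH : ∀ ρ : ℝ, H ρ =
      Real.exp (-2 / ρ ^ 2) / Real.sqrt (1 + 4 * Real.exp (-2 / ρ ^ 2) * ρ ^ ((-6 : ℝ)))) :
    (∀ ρ : ℝ, 0 < ρ → 0 < H ρ) ∧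
      Tendsto (fun ρ => D ρ / H ρ) (nhdsWithin 0 (Set.Ioi 0)) atTop := by
  obtain ⟨k, rfl⟩ : ∃ k, m = k + 1 := ⟨m - 1, (Nat.succ_pred_eq_of_pos hm).symm⟩
  have hneg6 : ∀ x : ℝ, x ^ ((-6 : ℝ)) = (x ^ 6)⁻¹ := by
    intro x
    rw [show ((-6:ℝ)) = ((-6 : ℤ) : ℝ) by norm_num, Real.rpow_intCast, zpow_neg]
    norm_cast
  have hcast : ∀ x : ℝ, x ^ ((((k+1) : ℕ) : ℝ) - 1) = x ^ k := by
    intro x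
    rw [show ((((k+1) : ℕ)) : ℝ) - 1 = ((k : ℕ) : ℝ) by push_cast; ring, Real.rpow_natCast]
  have hH' : ∀ ρ : ℝ, H ρ =
      Real.exp (-2 / ρ ^ 2) / Real.sqrt (1 + 4 * Real.exp (-2 / ρ ^ 2) * (ρ ^ 6)⁻¹) := by
    intro ρ; rw [hH, hneg6]
  have hD' : ∀ ρ : ℝ, D ρ = ρ ^ ((2:ℝ) - ((k+1 : ℕ) : ℝ)) * ∫ r in (0:ℝ)..ρ, auxG k r := by
    intro ρ
    rw [hD]
    congr 1
    apply intervalIntegral.integral_congr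
    intro r _
    simp only [auxG, hneg6, hcast]
  have hHpos : ∀ ρ : ℝ, 0 < ρ → 0 < H ρ := by
    intro ρ hρ
    rw [hH']
    have hs : 0 < Real.sqrt (1 + 4 * Real.exp (-2 / ρ ^ 2) * (ρ ^ 6)⁻¹) :=
      Real.sqrt_pos.2 (by positivity)
    positivity
  refine ⟨hHpos, ?_⟩
  have hlow : (fun ρ : ℝ => ((2:ℝ) ^ k)⁻¹ / ρ) ≤ᶠ[nhdsWithin 0 (Set.Ioi 0)]
      fun ρ => D ρ / H ρ := by
    filter_upwards [Ioo_mem_nhdsGT_of_mem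
      (show (0:ℝ) ∈ Set.Ico (0:ℝ) (1/32) by constructor <;> norm_num)] with ρ hρ
    rw [hD' ρ, hH' ρ]
    exact aux_key k ρ hρ.1 hρ.2.le
  apply tendsto_atTop_mono' _ hlow
  have : Tendsto (fun ρ : ℝ => ((2:ℝ) ^ k)⁻¹ * ρ⁻¹) (nhdsWithin 0 (Set.Ioi 0)) atTop :=
    Tendsto.const_mul_atTop (by positivity) tendsto_inv_nhdsGT_zero
  simpa [div_eq_mul_inv] using this
end
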